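/- (Artin–Schreier) Let k be a field of characteristic p > 0 and suppose L/k is a Galois field extension with Galois group cyclic of order p. Then there exists γ ∈ k such that L = k(α) where α is a root of the irreducible polynomial X^p − X + γ ∈ k[X]. -/

import Mathlib

open Polynomial

lemma AS.fixed_mem_range {k L : Type*} [Field k] [Field L] [Algebra k L] [IsGalois k L]
    {x : L} (hx : ∀ σ : L ≃ₐ[k] L, σ x = x) : ∃ c : k, algebraMap k L c = x := by
  have hInt : IsIntegral k x := Normal.isIntegral inferInstance x
  have hsep : (minpoly k x).Separable := Algebra.IsSeparable.isSeparable k x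
  have hsplit : Splits ((minpoly k x).map (algebraMap k L)) := Normal.splits inferInstance x
  have hnd : ((minpoly k x).map (algebraMap k L)).roots.Nodup :=
    nodup_roots (hsep.map)
  have hdeg : (minpoly k x).natDegree =
      Multiset.card ((minpoly k x).map (algebraMap k L)).roots :=
    (by rw [← natDegree_map (algebraMap k L)]; exact hsplit.natDegree_eq_card_roots)
  have hroot : ∀ r ∈ ((minpoly k x).map (algebraMap k L)).roots, r = x := by
    intro r hr
    have hr0 : aeval r (minpoly k x) = 0 := by
      have := (mem_roots').1 hr
      simpa [aeval_def, eval_map] using this.2.eq_zero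
    obtain ⟨σ, hσ⟩ := minpoly.exists_algEquiv_of_root hInt.isAlgebraic hr0
    have := hx σ
    exact σ.injective (by rw [hσ, this])
  have hsub : ((minpoly k x).map (algebraMap k L)).roots ≤ {x} := by
    rw [Multiset.le_iff_subset hnd]
    intro a ha
    simp [hroot a ha]
  have hcard : (minpoly k x).natDegree ≤ 1 := by
    rw [hdeg]
    simpa using Multiset.card_le_card hsub
  have h1 : (minpoly k x).natDegree = 1 :=
    le_antisymm hcard (minpoly.natDegree_pos hInt)
  exact (minpoly.natDegree_eq_one_iff).1 h1

/-- Artin–Schreier: If `L/k` is a Galois extension of fields of characteristic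
`p > 0` with Galois group of order `p` (hence cyclic of order `p`), then there is `γ ∈ k`
such that `L = k(α)` for a root `α` of the irreducible polynomial `X^p - X + γ ∈ k[X]`. -/
theorem artin_schreier
    {p : ℕ} (hp : p.Prime) (k L : Type*) [Field k] [CharP k p] [Field L] [Algebra k L]
    [IsGalois k L] (hcard : Nat.card (L ≃ₐ[k] L) = p) :
    ∃ γ : k, ∃ α : L,
      Irreducible ((X : k[X]) ^ p - X + C γ) ∧
      aeval α ((X : k[X]) ^ p - X + C γ) = 0 ∧
      Algebra.adjoin k ({α} : Set L) = ⊤ := by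
  classical
  haveI hfact : Fact p.Prime := ⟨hp⟩
  haveI hfinG : Finite (L ≃ₐ[k] L) :=
    Nat.finite_of_card_ne_zero (by rw [hcard]; exact hp.ne_zero)
  haveI : CharP L p := charP_of_injective_algebraMap (algebraMap k L).injective p
  have key : ∀ x : L, (∀ σ : L ≃ₐ[k] L, σ x = x) → ∃ c : k, algebraMap k L c = x :=
    fun x hx => AS.fixed_mem_range hx
  -- finite dimensionality
  haveI hFD : FiniteDimensional k L := by
    set F₀ := FixedPoints.subfield (L ≃ₐ[k] L) L with hF₀
    have hmem : ∀ c : k, algebraMap k L c ∈ F₀ := by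
      intro c σ
      exact σ.commutes c
    let φ : k →+* F₀ := (algebraMap k L).codRestrict F₀.toSubring hmem
    have hφbij : Function.Bijective φ := by
      constructor
      · intro a b hab
        have : algebraMap k L a = algebraMap k L b := congrArg Subtype.val hab
        exact (algebraMap k L).injective this
      · rintro ⟨y, hy⟩
        obtain ⟨c, hc⟩ := key y (fun σ => hy σ)
        exact ⟨c, Subtype.ext hc⟩
    let e : k ≃+* F₀ := RingEquiv.ofBijective φ hφbij
    have : Module.Finite F₀ L := inferInstance
    exact Module.Finite.of_equiv_equiv e.symm (RingEquiv.refl L) (by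
      ext y
      show algebraMap k L (e.symm y) = (y : L)
      conv_rhs => rw [← e.apply_symm_apply y]
      rfl)
  have hrank : Module.finrank k L = p := by
    rw [← IsGalois.card_aut_eq_finrank, hcard]
  -- a nontrivial automorphism
  haveI : Nontrivial (L ≃ₐ[k] L) := by
    apply Finite.one_lt_card_iff_nontrivial.1
    rw [hcard]
    exact hp.one_lt
  obtain ⟨σ, hσ1⟩ := exists_ne (1 : L ≃ₐ[k] L)
  have htop : Subgroup.zpowers σ = ⊤ := by
    rw [← Subgroup.card_eq_iff_eq_top, Nat.card_zpowers, hcard]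
    have hdvd : orderOf σ ∣ p := by
      rw [← hcard]; exact orderOf_dvd_natCard σ
    rcases (Nat.Prime.eq_one_or_self_of_dvd hp _ hdvd) with h | h
    · exact absurd (orderOf_eq_one_iff.1 h) hσ1
    · exact h
  have hfix : ∀ x : L, σ x = x → ∃ c : k, algebraMap k L c = x := by
    intro x hx
    apply key
    intro τ
    have hτ : τ ∈ Subgroup.zpowers σ := htop ▸ Subgroup.mem_top τ
    obtain ⟨n, rfl⟩ := hτ
    have hnat : ∀ m : ℕ, (σ ^ m) x = x := by
      intro m
      induction m with
      | zero => simp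
      | succ i ih => rw [pow_succ, AlgEquiv.mul_apply, hx, ih]
    rcases n with n | n
    · show (σ ^ (Int.ofNat n)) x = x
      simpa using hnat n
    · show (σ ^ (Int.negSucc n)) x = x
      rw [zpow_negSucc]
      calc ((σ ^ (n + 1))⁻¹) x = ((σ ^ (n + 1))⁻¹) ((σ ^ (n + 1)) x) := by rw [hnat (n + 1)]
        _ = x := by rw [← AlgEquiv.mul_apply, inv_mul_cancel, AlgEquiv.one_apply]
  -- the additive Hilbert 90 style argument via trace
  set f : L →ₗ[k] L := σ.toLinearMap - LinearMap.id with hf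
  have hfapply : ∀ x : L, f x = σ x - x := fun x => rfl
  have hker : LinearMap.ker f = LinearMap.range (Algebra.linearMap k L) := by
    ext x
    simp only [LinearMap.mem_ker, LinearMap.mem_range, hfapply, sub_eq_zero,
      Algebra.linearMap_apply]
    constructor
    · intro hx
      exact hfix x hx
    · rintro ⟨c, rfl⟩
      exact σ.commutes c
  have hker1 : Module.finrank k (LinearMap.ker f) = 1 := by
    rw [hker, LinearMap.finrank_range_of_inj (by
      intro a b hab
      exact (algebraMap k L).injective hab), Module.finrank_self]
  have hrangef : Module.finrank k (LinearMap.range f) = p - 1 := by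
    have h := LinearMap.finrank_range_add_finrank_ker f
    rw [hker1, hrank] at h
    omega
  set Tr : L →ₗ[k] k := Algebra.trace k L with hTr
  have hTrsurj : Function.Surjective Tr := Algebra.trace_surjective k L
  have hTrker : Module.finrank k (LinearMap.ker Tr) = p - 1 := by
    have h := LinearMap.finrank_range_add_finrank_ker Tr
    rw [LinearMap.range_eq_top.2 hTrsurj, finrank_top, Module.finrank_self, hrank] at h
    omega
  have hle : LinearMap.range f ≤ LinearMap.ker Tr := by
    rintro _ ⟨x, rfl⟩
    rw [LinearMap.mem_ker, hfapply, map_sub]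
    rw [hTr, Algebra.trace_eq_of_algEquiv σ x, sub_self]
  have heq : LinearMap.range f = LinearMap.ker Tr :=
    Submodule.eq_of_le_of_finrank_le hle (by rw [hTrker, hrangef])
  have h1mem : (1 : L) ∈ LinearMap.ker Tr := by
    rw [LinearMap.mem_ker, hTr]
    have h1 : (1 : L) = algebraMap k L 1 := by simp
    rw [h1, Algebra.trace_algebraMap, hrank]
    simp [nsmul_eq_mul, CharP.cast_eq_zero k p]
  obtain ⟨α, hα⟩ : ∃ α : L, σ α - α = 1 := by
    rw [← heq] at h1mem
    obtain ⟨α, hα⟩ := h1mem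
    exact ⟨α, by rw [← hfapply, hα]⟩
  have hσα : σ α = α + 1 := by
    have := sub_eq_iff_eq_add.1 hα
    rw [this]; ring
  -- the Artin-Schreier element
  have hfixel : σ (α ^ p - α) = α ^ p - α := by
    rw [map_sub, map_pow, hσα, add_pow_char]
    ring
  obtain ⟨c, hc⟩ := hfix _ hfixel
  -- the polynomial
  set P : k[X] := (X : k[X]) ^ p - X + C (-c) with hP
  have haeval : aeval α P = 0 := by
    rw [hP]
    simp only [map_add, map_sub, map_pow, aeval_X, aeval_C, map_neg, hc]
    ring
  have h2 : P = X ^ p + (-(X : k[X]) + C (-c)) := by rw [hP]; ring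
  have h3 : (-(X : k[X]) + C (-c)).degree ≤ 1 := by
    apply le_trans (degree_add_le _ _)
    apply max_le
    · rw [degree_neg, degree_X]
    · exact le_trans degree_C_le (by norm_num)
  have h4 : (-(X : k[X]) + C (-c)).degree < (p : WithBot ℕ) :=
    lt_of_le_of_lt h3 (by exact_mod_cast hp.one_lt)
  have hPmonic : P.Monic := by
    rw [h2]
    exact monic_X_pow_add h4
  have hPdeg : P.natDegree = p := by
    rw [h2]
    have := degree_add_eq_left_of_degree_lt (p := (X : k[X]) ^ p)
      (q := -(X : k[X]) + C (-c)) (by rw [degree_X_pow]; exact h4)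
    rw [natDegree_eq_of_degree_eq this, natDegree_X_pow]
  -- α is integral, not in the base field
  have hInt : IsIntegral k α := Algebra.IsIntegral.isIntegral α
  have hdvd : minpoly k α ∣ P := minpoly.dvd k α haeval
  have hαnb : ¬∃ c' : k, algebraMap k L c' = α := by
    rintro ⟨c', rfl⟩
    have h := σ.commutes c'
    rw [hσα] at h
    simp at h
  -- the degree of the minimal polynomial is p
  have hd1 : Module.finrank k (IntermediateField.adjoin k {α} : IntermediateField k L) ≠ 1 := by
    intro h1
    rw [IntermediateField.finrank_eq_one_iff] at h1
    have hmem : α ∈ (IntermediateField.adjoin k {α} : IntermediateField k L) :=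
      IntermediateField.mem_adjoin_simple_self k α
    rw [h1, IntermediateField.mem_bot] at hmem
    exact hαnb hmem
  have hdvd2 : Module.finrank k (IntermediateField.adjoin k {α} : IntermediateField k L) ∣ p := by
    rw [← hrank]
    exact ⟨Module.finrank (IntermediateField.adjoin k {α} : IntermediateField k L) L,
      (Module.finrank_mul_finrank k _ L).symm⟩
  have hdp : Module.finrank k (IntermediateField.adjoin k {α} : IntermediateField k L) = p :=
    ((Nat.Prime.eq_one_or_self_of_dvd hp _ hdvd2).resolve_left hd1)
  have hmindeg : (minpoly k α).natDegree = p := by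
    rw [← IntermediateField.adjoin.finrank hInt, hdp]
  have hmin : P = minpoly k α :=
    eq_of_monic_of_dvd_of_natDegree_le (minpoly.monic hInt) hPmonic hdvd
      (le_of_eq (by rw [hPdeg, hmindeg]))
  refine ⟨-c, α, ?_, haeval, ?_⟩
  · have hirr : Irreducible (minpoly k α) := minpoly.irreducible hInt
    rwa [← hmin] at hirr
  · have hsubm : Subalgebra.toSubmodule
        (IntermediateField.adjoin k {α} : IntermediateField k L).toSubalgebra = ⊤ :=
      Submodule.eq_top_of_finrank_eq (by rw [hrank]; exact hdp)
    have htop' : (IntermediateField.adjoin k {α} : IntermediateField k L) = ⊤ := by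
      apply IntermediateField.toSubalgebra_injective
      rw [IntermediateField.top_toSubalgebra]
      exact Algebra.toSubmodule_eq_top.mp hsubm
    have h5 := IntermediateField.adjoin_simple_toSubalgebra_of_isAlgebraic hInt.isAlgebraic
    rw [← h5, htop']
    rfl
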